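/- Let p be an odd prime and c_1, ..., c_n nonzero integers with |c_1|, ..., |c_n| pairwise distinct (i.e., c_i ≠ c_j and c_i ≠ -c_j for i ≠ j). Then the n×n matrix with (i,j)-entry c_j^{p^{i-1}} has nonzero determinant. -/

import Mathlib

open Polynomial

/-- A nonzero real polynomial with at most `k` nonzero coefficients has fewer than `k`
distinct positive roots. -/
lemma aux_sparse_pos_roots : ∀ (k : ℕ), ∀ (f : ℝ[X]), f ≠ 0 → f.support.card ≤ k →
    (f.roots.toFinset.filter fun x => 0 < x).card + 1 ≤ k := by
  intro k
  induction k with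
  | zero =>
    intro f hf hcard
    exact absurd (Finset.card_eq_zero.mp (Nat.le_zero.mp hcard)) (by simpa using hf)
  | succ k ih =>
    intro f hf hcard
    set m := f.natTrailingDegree with hm
    have hdvd : X ^ m ∣ f := X_pow_dvd_iff.mpr fun d hd => coeff_eq_zero_of_lt_natTrailingDegree hd
    obtain ⟨g, hg⟩ := hdvd
    have hg0 : g ≠ 0 := fun h => hf (by simp [hg, h])
    have hgc0 : g.coeff 0 ≠ 0 := by
      have h1 : f.coeff m ≠ 0 := coeff_natTrailingDegree_ne_zero.mpr hf
      have h2 : (X ^ m * g).coeff m = g.coeff 0 := by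
        simpa using coeff_X_pow_mul g m 0
      rw [hg, h2] at h1
      exact h1
    -- support of g injects into support of f
    have hsupg : g.support.card ≤ k + 1 := by
      refine le_trans (Finset.card_le_card_of_injOn (fun n => n + m) ?_ ?_) hcard
      · intro a ha
        simp only [Finset.mem_coe, mem_support_iff] at ha ⊢
        rw [hg, coeff_X_pow_mul]
        exact ha
      · intro a _ b _ h; simp only at h; omega
    -- positive roots of f are positive roots of g
    have hroots : (f.roots.toFinset.filter fun x => 0 < x) ⊆
        (g.roots.toFinset.filter fun x => 0 < x) := by
      intro x hx
      simp only [Finset.mem_filter, Multiset.mem_toFinset, mem_roots hf, mem_roots hg0] at hx ⊢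
      obtain ⟨hfx, hxpos⟩ := hx
      refine ⟨?_, hxpos⟩
      have hfx2 : x ^ m * g.eval x = 0 := by
        have := hfx
        rw [hg] at this
        simpa only [IsRoot, eval_mul, eval_pow, eval_X] using this
      rcases mul_eq_zero.mp hfx2 with h | h
      · exact absurd h (pow_ne_zero _ (ne_of_gt hxpos))
      · exact h
    rcases eq_or_ne (derivative g) 0 with hd | hd
    · have : g = C (g.coeff 0) := eq_C_of_derivative_eq_zero hd
      have hroots0 : g.roots = 0 := by rw [this]; exact roots_C _
      have : (f.roots.toFinset.filter fun x => 0 < x).card = 0 := by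
        rw [Finset.card_eq_zero]
        refine Finset.subset_empty.mp ?_
        intro x hx
        have := hroots hx
        simp [hroots0] at this
      omega
    · -- interleaving: positive roots of g vs positive roots of g'
      set s := (g.roots.toFinset.filter fun x => 0 < x) with hs
      set t := ((derivative g).roots.toFinset.filter fun x => 0 < x) with ht
      have hst : s.card ≤ (t \ s).card + 1 := by
        refine Finset.card_le_diff_of_interleaved fun x hx y hy hxy hxy' => ?_
        simp only [hs, Finset.mem_filter, Multiset.mem_toFinset, mem_roots hg0] at hx hy
        obtain ⟨z, hz1, hz2⟩ := exists_deriv_eq_zero hxy g.continuousOn (hx.1.trans hy.1.symm)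
        refine ⟨z, ?_, hz1⟩
        simp only [ht, Finset.mem_filter, Multiset.mem_toFinset, mem_roots hd]
        exact ⟨by rwa [IsRoot, ← g.deriv], hx.2.trans hz1.1⟩
      -- support of derivative is smaller
      have hsupd : (derivative g).support.card ≤ k := by
        have h1 : (derivative g).support.card ≤ (g.support.erase 0).card := by
          refine Finset.card_le_card_of_injOn (fun n => n + 1) ?_ ?_
          · intro a ha
            simp only [Finset.mem_coe, mem_support_iff, coeff_derivative] at ha
            have : g.coeff (a + 1) ≠ 0 := fun h => ha (by simp [h])
            simp only [Finset.mem_coe, Finset.mem_erase, mem_support_iff]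
            exact ⟨Nat.succ_ne_zero a, this⟩
          · intro a _ b _ h; simp only at h; omega
        have h2 : 0 ∈ g.support := mem_support_iff.mpr hgc0
        have h3 := Finset.card_erase_of_mem h2
        omega
      have hih := ih (derivative g) hd hsupd
      rw [← ht] at hih
      have hcards : (f.roots.toFinset.filter fun x => 0 < x).card ≤ s.card :=
        Finset.card_le_card hroots
      have : (t \ s).card ≤ t.card := Finset.card_le_card (Finset.sdiff_subset)
      omega

theorem stmt_1 (p : ℕ) (hp : p.Prime) (hodd : p ≠ 2) (n : ℕ) (c : Fin n → ℤ)
    (hne : ∀ i, c i ≠ 0)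
    (habs : ∀ i j : Fin n, i ≠ j → c i ≠ c j ∧ c i ≠ -c j) :
    (Matrix.of (fun i j : Fin n => c j ^ p ^ (i : ℕ))).det ≠ 0 := by
  intro hdet
  -- move to ℝ
  have hdetR : (Matrix.of (fun i j : Fin n => ((c j : ℝ)) ^ p ^ (i : ℕ))).det = 0 := by
    have h1 := RingHom.map_det (Int.castRingHom ℝ) (Matrix.of fun i j : Fin n => c j ^ p ^ (i : ℕ))
    rw [hdet, map_zero] at h1
    have h2 : (Int.castRingHom ℝ).mapMatrix (Matrix.of fun i j : Fin n => c j ^ p ^ (i : ℕ)) =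
        Matrix.of (fun i j : Fin n => ((c j : ℝ)) ^ p ^ (i : ℕ)) := by
      ext i j
      simp only [RingHom.mapMatrix_apply, Matrix.map_apply, Matrix.of_apply, eq_intCast]
      push_cast
      ring
    rw [h2] at h1
    exact h1.symm
  obtain ⟨v, hv0, hv⟩ := (Matrix.exists_vecMul_eq_zero_iff).mpr hdetR
  -- the sparse polynomial
  set f : ℝ[X] := ∑ i : Fin n, C (v i) * X ^ (p ^ (i : ℕ)) with hfdef
  have hpinj : Function.Injective (fun i : ℕ => p ^ i) :=
    Nat.pow_right_injective hp.two_le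
  obtain ⟨i0, hi0⟩ := Function.ne_iff.mp hv0
  have hf0 : f ≠ 0 := by
    intro h
    have : f.coeff (p ^ (i0 : ℕ)) = v i0 := by
      rw [hfdef, finset_sum_coeff]
      rw [Finset.sum_eq_single i0]
      · simp [coeff_X_pow]
      · intro b _ hb
        have hbne : p ^ (b : ℕ) ≠ p ^ (i0 : ℕ) := fun hh =>
          hb (Fin.ext (hpinj hh))
        rw [coeff_C_mul, coeff_X_pow, if_neg (fun hh => hbne hh.symm), mul_zero]
      · simp
    rw [h] at this
    simp at this
    exact hi0 this.symm
  have hsup : f.support.card ≤ n := by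
    have hsub : f.support ⊆ Finset.univ.image (fun i : Fin n => p ^ (i : ℕ)) := by
      intro k hk
      rw [mem_support_iff] at hk
      by_contra hk2
      apply hk
      rw [hfdef, finset_sum_coeff]
      refine Finset.sum_eq_zero fun i _ => ?_
      have : p ^ (i : ℕ) ≠ k := fun hh => hk2 (by
        rw [← hh]; exact Finset.mem_image_of_mem _ (Finset.mem_univ i))
      rw [coeff_C_mul, coeff_X_pow, if_neg (fun hh => this hh.symm), mul_zero]
    calc f.support.card ≤ (Finset.univ.image (fun i : Fin n => p ^ (i : ℕ))).card :=
          Finset.card_le_card hsub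
      _ ≤ Finset.univ.card := Finset.card_image_le
      _ = n := by simp
  -- evaluation at c j is zero
  have heval : ∀ j : Fin n, f.eval ((c j : ℝ)) = 0 := by
    intro j
    have := congrFun hv j
    simp only [Matrix.vecMul, dotProduct, Matrix.of_apply, Pi.zero_apply] at this
    rw [hfdef]
    simp only [eval_finset_sum, eval_mul, eval_C, eval_pow, eval_X]
    exact this
  -- f is odd
  have hodd' : ∀ i : ℕ, Odd (p ^ i) := fun i => (hp.odd_of_ne_two hodd).pow
  have hevalneg : ∀ x : ℝ, f.eval (-x) = - f.eval x := by
    intro x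
    rw [hfdef]
    simp only [eval_finset_sum, eval_mul, eval_C, eval_pow, eval_X]
    rw [← Finset.sum_neg_distrib]
    refine Finset.sum_congr rfl fun i _ => ?_
    rw [(hodd' (i : ℕ)).neg_pow, mul_neg]
  -- |c j| are distinct positive roots
  have habsroot : ∀ j : Fin n, f.eval (|(c j : ℝ)|) = 0 := by
    intro j
    rcases abs_choice ((c j : ℝ)) with h | h
    · rw [h]; exact heval j
    · rw [h, hevalneg, heval j, neg_zero]
  have hS : (Finset.univ.image fun j : Fin n => |(c j : ℝ)|) ⊆
      (f.roots.toFinset.filter fun x => 0 < x) := by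
    intro x hx
    simp only [Finset.mem_image, Finset.mem_univ, true_and] at hx
    obtain ⟨j, rfl⟩ := hx
    simp only [Finset.mem_filter, Multiset.mem_toFinset, mem_roots hf0]
    refine ⟨habsroot j, ?_⟩
    rw [abs_pos]
    exact_mod_cast hne j
  have hcardS : (Finset.univ.image fun j : Fin n => |(c j : ℝ)|).card = n := by
    rw [Finset.card_image_of_injective _ ?_, Finset.card_univ, Fintype.card_fin]
    intro a b hab
    by_contra hne'
    rcases abs_eq_abs.mp hab with h | h
    · exact (habs a b hne').1 (by exact_mod_cast h)
    · exact (habs a b hne').2 (by exact_mod_cast h)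
  have hfinal := aux_sparse_pos_roots n f hf0 hsup
  have : n ≤ (f.roots.toFinset.filter fun x => 0 < x).card := by
    rw [← hcardS]; exact Finset.card_le_card hS
  omega
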